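/- Let R be an associative real algebra with identity, equipped with an involution γ (an ℝ-linear anti-automorphism with γ∘γ = id) such that γ(a)·a = a·γ(a) ∈ ℝ·1 for all a ∈ R. Then the norm polynomial is multiplicative: for all A, B ∈ R[t], ν(A·B) = ν(A)·ν(B), where ν(C) := C·γ(C). In particular, if C = C'·(t − h) then ν(t − h) divides ν(C). -/

import Mathlib

open Polynomial Finset

/-- Coefficientwise application of the involution `star` to a left polynomial. -/
noncomputable def pconj {R : Type*} [Ring R] [StarRing R] (p : Polynomial R) : Polynomial R :=
  ⟨AddMonoidAlgebra.ofCoeff (Finsupp.mapRange star (star_zero R) p.toFinsupp.coeff)⟩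

lemma pconj_coeff {R : Type*} [Ring R] [StarRing R] (p : Polynomial R) (n : ℕ) :
    (pconj p).coeff n = star (p.coeff n) := by
  simp [pconj, Polynomial.coeff, Finsupp.mapRange_apply]

lemma swap_sum {M : Type*} [AddCommMonoid M] (n : ℕ) (f : ℕ → ℕ → M) :
    ∑ p ∈ antidiagonal n, f p.1 p.2 = ∑ p ∈ antidiagonal n, f p.2 p.1 := by
  conv_rhs => rw [← Finset.HasAntidiagonal.map_swap_antidiagonal, Finset.sum_map]
  rfl

lemma pconj_mul {R : Type*} [Ring R] [StarRing R] (A B : Polynomial R) :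
    pconj (A * B) = pconj B * pconj A := by
  ext n
  simp only [pconj_coeff, coeff_mul, star_sum, star_mul]
  exact swap_sum n fun i j => star (B.coeff j) * star (A.coeff i)

lemma pair_real {R : Type*} [Ring R] [Algebra ℝ R] [StarRing R]
    (hreal : ∀ a : R, ∃ r : ℝ, star a * a = algebraMap ℝ R r) (x y : R) :
    ∃ r : ℝ, x * star y + y * star x = algebraMap ℝ R r := by
  obtain ⟨r, hr⟩ := hreal (star (x + y))
  obtain ⟨rx, hx⟩ := hreal (star x)
  obtain ⟨ry, hy⟩ := hreal (star y)
  simp only [star_star] at hr hx hy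
  refine ⟨r - rx - ry, ?_⟩
  have e : x * star y + y * star x = (x + y) * star (x + y) - x * star x - y * star y := by
    rw [star_add]; noncomm_ring
  rw [e, hr, hx, hy, ← map_sub, ← map_sub]

lemma nu_coeff_real {R : Type*} [Ring R] [Algebra ℝ R] [StarRing R]
    (hreal : ∀ a : R, ∃ r : ℝ, star a * a = algebraMap ℝ R r) (B : Polynomial R) (n : ℕ) :
    ∃ r : ℝ, (B * pconj B).coeff n = algebraMap ℝ R r := by
  classical
  set g : ℕ × ℕ → ℝ :=
    fun p => Classical.choose (pair_real hreal (B.coeff p.1) (B.coeff p.2)) with hgdef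
  have hg : ∀ p : ℕ × ℕ,
      B.coeff p.1 * star (B.coeff p.2) + B.coeff p.2 * star (B.coeff p.1)
        = algebraMap ℝ R (g p) :=
    fun p => Classical.choose_spec (pair_real hreal (B.coeff p.1) (B.coeff p.2))
  refine ⟨(∑ p ∈ antidiagonal n, g p) / 2, ?_⟩
  set c := (B * pconj B).coeff n with hc
  have key : c + c = algebraMap ℝ R (∑ p ∈ antidiagonal n, g p) := by
    have hc' : c = ∑ p ∈ antidiagonal n, B.coeff p.1 * star (B.coeff p.2) := by
      rw [hc, coeff_mul]; simp only [pconj_coeff]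
    have hc'' : c = ∑ p ∈ antidiagonal n, B.coeff p.2 * star (B.coeff p.1) := by
      rw [hc']; exact swap_sum n fun i j => B.coeff i * star (B.coeff j)
    rw [map_sum]
    nth_rewrite 1 [hc']
    nth_rewrite 1 [hc'']
    rw [← Finset.sum_add_distrib]
    exact Finset.sum_congr rfl fun p _ => hg p
  have h2 : c = (1/2 : ℝ) • (c + c) := by
    rw [smul_add]
    rw [← add_smul]
    norm_num
  rw [h2, key, Algebra.smul_def, ← map_mul]
  congr 1
  ring

lemma comm_of_real {R : Type*} [Ring R] [Algebra ℝ R] (P Q : Polynomial R)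
    (hP : ∀ n, ∃ r : ℝ, P.coeff n = algebraMap ℝ R r) : P * Q = Q * P := by
  ext n
  rw [coeff_mul, coeff_mul]
  conv_rhs => rw [swap_sum n fun i j => Q.coeff i * P.coeff j]
  refine Finset.sum_congr rfl fun p _ => ?_
  obtain ⟨r, hr⟩ := hP p.1
  rw [hr]
  exact Algebra.commutes r _

/-- If the involution satisfies `star a * a = a * star a ∈ ℝ·1` for all `a`, then the norm
polynomial `ν(F) = F · γ(F)` is multiplicative; in particular `ν(t - h) ∣ ν(F)` whenever
`t - h` is a right factor of `F`. -/
theorem norm_polynomial_multiplicative {R : Type*} [Ring R] [Algebra ℝ R]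
    [StarRing R] [StarModule ℝ R]
    (hcomm : ∀ a : R, star a * a = a * star a)
    (hreal : ∀ a : R, ∃ r : ℝ, star a * a = algebraMap ℝ R r) :
    (∀ A B : Polynomial R, (A * B) * pconj (A * B) = (A * pconj A) * (B * pconj B)) ∧
    ∀ (F F' : Polynomial R) (h : R), F = F' * (X - Polynomial.C h) →
      (X - Polynomial.C h) * pconj (X - Polynomial.C h) ∣ F * pconj F := by
  have hmul : ∀ A B : Polynomial R, (A * B) * pconj (A * B) = (A * pconj A) * (B * pconj B) := by
    intro A B
    rw [pconj_mul]
    have h1 : A * B * (pconj B * pconj A) = A * ((B * pconj B) * pconj A) := by noncomm_ring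
    rw [h1, comm_of_real (B * pconj B) (pconj A) (nu_coeff_real hreal B)]
    noncomm_ring
  refine ⟨hmul, fun F F' h hF => ?_⟩
  subst hF
  rw [hmul F' (X - Polynomial.C h)]
  exact ⟨F' * pconj F',
    (comm_of_real _ _ (nu_coeff_real hreal (X - Polynomial.C h))).symm⟩
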